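/- Let η⁺ = (μ+k)x + (μ+k)²t + φ⁺, η⁻ = −(μ−k)x − (μ−k)²t + φ⁻, and e^{φ₀} = 1/(4k²) with k ≠ 0. Then e⁺ = e^{η⁺}/(1 + e^{η⁺+η⁻+φ₀}) and e⁻ = −e^{η⁻}/(1 + e^{η⁺+η⁻+φ₀}) satisfy the reaction-diffusion system −e⁺_t + e⁺_xx = −2h e⁺, e⁻_t + e⁻_xx = −2h e⁻ with h = −e⁺e⁻. -/

import Mathlib

/-- Partial derivative in the first (space) variable. -/
noncomputable def pX (f : ℝ → ℝ → ℝ) : ℝ → ℝ → ℝ :=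
  fun x t => deriv (fun y => f y t) x

/-- Partial derivative in the second (time) variable. -/
noncomputable def pT (f : ℝ → ℝ → ℝ) : ℝ → ℝ → ℝ :=
  fun x t => deriv (fun s => f x s) t

/-- Phase `η⁺ = (μ+k)x + (μ+k)²t + φ⁺`. -/
noncomputable def etaP (k mu phip : ℝ) (x t : ℝ) : ℝ :=
  (mu + k) * x + (mu + k) ^ 2 * t + phip

/-- Phase `η⁻ = −(μ−k)x − (μ−k)²t + φ⁻`. -/
noncomputable def etaM (k mu phim : ℝ) (x t : ℝ) : ℝ :=
  -(mu - k) * x - (mu - k) ^ 2 * t + phim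

/-- One-soliton `e⁺ = e^{η⁺}/(1 + e^{η⁺+η⁻+φ₀})`. -/
noncomputable def solEp (k mu phip phim phi0 : ℝ) : ℝ → ℝ → ℝ :=
  fun x t => Real.exp (etaP k mu phip x t) /
    (1 + Real.exp (etaP k mu phip x t + etaM k mu phim x t + phi0))

/-- One-soliton `e⁻ = −e^{η⁻}/(1 + e^{η⁺+η⁻+φ₀})`. -/
noncomputable def solEm (k mu phip phim phi0 : ℝ) : ℝ → ℝ → ℝ :=
  fun x t => -Real.exp (etaM k mu phim x t) /
    (1 + Real.exp (etaP k mu phip x t + etaM k mu phim x t + phi0))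

lemma hasDerivAt_etaP_x (k mu phip x t : ℝ) :
    HasDerivAt (fun y => etaP k mu phip y t) (mu + k) x := by
  have h := (((hasDerivAt_id x).const_mul (mu + k)).add_const ((mu + k) ^ 2 * t)).add_const phip
  simpa [etaP, mul_one] using h

lemma hasDerivAt_etaM_x (k mu phim x t : ℝ) :
    HasDerivAt (fun y => etaM k mu phim y t) (-(mu - k)) x := by
  have h := (((hasDerivAt_id x).const_mul (-(mu - k))).sub_const ((mu - k) ^ 2 * t)).add_const phim
  simpa [etaM, mul_one, sub_eq_add_neg] using h

lemma hasDerivAt_etaP_t (k mu phip x t : ℝ) :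
    HasDerivAt (fun s => etaP k mu phip x s) ((mu + k) ^ 2) t := by
  have h := (((hasDerivAt_id t).const_mul ((mu + k) ^ 2)).const_add ((mu + k) * x)).add_const phip
  simpa [etaP, mul_one] using h

lemma hasDerivAt_etaM_t (k mu phim x t : ℝ) :
    HasDerivAt (fun s => etaM k mu phim x s) (-(mu - k) ^ 2) t := by
  have h := (((hasDerivAt_id t).const_mul ((mu - k) ^ 2)).const_sub (-(mu - k) * x)).add_const phim
  simpa [etaM, mul_one, sub_eq_add_neg] using h

/-- x-derivative of e⁺ (closed form). -/
noncomputable def epx (k mu phip phim phi0 : ℝ) : ℝ → ℝ → ℝ := fun x t =>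
  Real.exp (etaP k mu phip x t) *
    ((mu + k) + (mu - k) * Real.exp (etaP k mu phip x t + etaM k mu phim x t + phi0)) /
    (1 + Real.exp (etaP k mu phip x t + etaM k mu phim x t + phi0)) ^ 2

/-- x-derivative of e⁻ (closed form). -/
noncomputable def emx (k mu phip phim phi0 : ℝ) : ℝ → ℝ → ℝ := fun x t =>
  Real.exp (etaM k mu phim x t) *
    ((mu - k) + (mu + k) * Real.exp (etaP k mu phip x t + etaM k mu phim x t + phi0)) /
    (1 + Real.exp (etaP k mu phip x t + etaM k mu phim x t + phi0)) ^ 2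

/-- second x-derivative of e⁺ (closed form). -/
noncomputable def epxx (k mu phip phim phi0 : ℝ) : ℝ → ℝ → ℝ := fun x t =>
  Real.exp (etaP k mu phip x t) *
    (((mu + k) * ((mu + k) + (mu - k) * Real.exp (etaP k mu phip x t + etaM k mu phim x t + phi0))
        + 2 * k * (mu - k) * Real.exp (etaP k mu phip x t + etaM k mu phim x t + phi0)) *
      (1 + Real.exp (etaP k mu phip x t + etaM k mu phim x t + phi0))
      - 4 * k * Real.exp (etaP k mu phip x t + etaM k mu phim x t + phi0) *
        ((mu + k) + (mu - k) * Real.exp (etaP k mu phip x t + etaM k mu phim x t + phi0))) /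
    (1 + Real.exp (etaP k mu phip x t + etaM k mu phim x t + phi0)) ^ 3

/-- second x-derivative of e⁻ (closed form). -/
noncomputable def emxx (k mu phip phim phi0 : ℝ) : ℝ → ℝ → ℝ := fun x t =>
  Real.exp (etaM k mu phim x t) *
    ((-(mu - k) * ((mu - k) + (mu + k) * Real.exp (etaP k mu phip x t + etaM k mu phim x t + phi0))
        + 2 * k * (mu + k) * Real.exp (etaP k mu phip x t + etaM k mu phim x t + phi0)) *
      (1 + Real.exp (etaP k mu phip x t + etaM k mu phim x t + phi0))
      - 4 * k * Real.exp (etaP k mu phip x t + etaM k mu phim x t + phi0) *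
        ((mu - k) + (mu + k) * Real.exp (etaP k mu phip x t + etaM k mu phim x t + phi0))) /
    (1 + Real.exp (etaP k mu phip x t + etaM k mu phim x t + phi0)) ^ 3

lemma den_ne (z : ℝ) : (1 + Real.exp z) ≠ 0 := by positivity

lemma solEp_hasDerivX (k mu phip phim phi0 x t : ℝ) :
    HasDerivAt (fun y => solEp k mu phip phim phi0 y t) (epx k mu phip phim phi0 x t) x := by
  have hP := (hasDerivAt_etaP_x k mu phip x t).exp
  have hS := (((hasDerivAt_etaP_x k mu phip x t).add (hasDerivAt_etaM_x k mu phim x t)).add_const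
    phi0).exp
  have hD := hS.const_add 1
  have hne := den_ne (etaP k mu phip x t + etaM k mu phim x t + phi0)
  have h := hP.div hD hne
  simp only [solEp, epx]
  refine h.congr_deriv ?_
  simp only [Pi.add_apply, Pi.pow_apply]
  field_simp
  ring

lemma solEm_hasDerivX (k mu phip phim phi0 x t : ℝ) :
    HasDerivAt (fun y => solEm k mu phip phim phi0 y t) (emx k mu phip phim phi0 x t) x := by
  have hM := (hasDerivAt_etaM_x k mu phim x t).exp
  have hS := (((hasDerivAt_etaP_x k mu phip x t).add (hasDerivAt_etaM_x k mu phim x t)).add_const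
    phi0).exp
  have hD := hS.const_add 1
  have hne := den_ne (etaP k mu phip x t + etaM k mu phim x t + phi0)
  have h := (hM.div hD hne).neg
  simp only [solEm, emx, neg_div]
  refine h.congr_deriv ?_
  simp only [Pi.add_apply, Pi.pow_apply]
  field_simp
  ring

lemma solEp_hasDerivT (k mu phip phim phi0 x t : ℝ) :
    HasDerivAt (fun s => solEp k mu phip phim phi0 x s)
      (Real.exp (etaP k mu phip x t) *
        ((mu + k) ^ 2 + (mu - k) ^ 2 * Real.exp (etaP k mu phip x t + etaM k mu phim x t + phi0)) /
        (1 + Real.exp (etaP k mu phip x t + etaM k mu phim x t + phi0)) ^ 2) t := by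
  have hP := (hasDerivAt_etaP_t k mu phip x t).exp
  have hS := (((hasDerivAt_etaP_t k mu phip x t).add (hasDerivAt_etaM_t k mu phim x t)).add_const
    phi0).exp
  have hD := hS.const_add 1
  have hne := den_ne (etaP k mu phip x t + etaM k mu phim x t + phi0)
  have h := hP.div hD hne
  simp only [solEp]
  refine h.congr_deriv ?_
  simp only [Pi.add_apply, Pi.pow_apply]
  field_simp
  ring

lemma solEm_hasDerivT (k mu phip phim phi0 x t : ℝ) :
    HasDerivAt (fun s => solEm k mu phip phim phi0 x s)
      (Real.exp (etaM k mu phim x t) *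
        ((mu - k) ^ 2 + (mu + k) ^ 2 * Real.exp (etaP k mu phip x t + etaM k mu phim x t + phi0)) /
        (1 + Real.exp (etaP k mu phip x t + etaM k mu phim x t + phi0)) ^ 2) t := by
  have hM := (hasDerivAt_etaM_t k mu phim x t).exp
  have hS := (((hasDerivAt_etaP_t k mu phip x t).add (hasDerivAt_etaM_t k mu phim x t)).add_const
    phi0).exp
  have hD := hS.const_add 1
  have hne := den_ne (etaP k mu phip x t + etaM k mu phim x t + phi0)
  have h := (hM.div hD hne).neg
  simp only [solEm, neg_div]
  refine h.congr_deriv ?_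
  simp only [Pi.add_apply, Pi.pow_apply]
  field_simp
  ring

lemma epx_hasDerivX (k mu phip phim phi0 x t : ℝ) :
    HasDerivAt (fun y => epx k mu phip phim phi0 y t) (epxx k mu phip phim phi0 x t) x := by
  have hP := (hasDerivAt_etaP_x k mu phip x t).exp
  have hS := (((hasDerivAt_etaP_x k mu phip x t).add (hasDerivAt_etaM_x k mu phim x t)).add_const
    phi0).exp
  have hN := hP.mul ((hS.const_mul (mu - k)).const_add (mu + k))
  have hD2 := (hS.const_add 1).pow 2
  have hne2 : (1 + Real.exp (etaP k mu phip x t + etaM k mu phim x t + phi0)) ^ 2 ≠ 0 :=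
    pow_ne_zero 2 (den_ne _)
  have hne := den_ne (etaP k mu phip x t + etaM k mu phim x t + phi0)
  have h := hN.div hD2 hne2
  simp only [epx, epxx]
  refine h.congr_deriv ?_
  simp only [Pi.add_apply, Pi.pow_apply, Pi.mul_apply]
  field_simp
  ring

lemma emx_hasDerivX (k mu phip phim phi0 x t : ℝ) :
    HasDerivAt (fun y => emx k mu phip phim phi0 y t) (emxx k mu phip phim phi0 x t) x := by
  have hM := (hasDerivAt_etaM_x k mu phim x t).exp
  have hS := (((hasDerivAt_etaP_x k mu phip x t).add (hasDerivAt_etaM_x k mu phim x t)).add_const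
    phi0).exp
  have hN := hM.mul ((hS.const_mul (mu + k)).const_add (mu - k))
  have hD2 := (hS.const_add 1).pow 2
  have hne2 : (1 + Real.exp (etaP k mu phip x t + etaM k mu phim x t + phi0)) ^ 2 ≠ 0 :=
    pow_ne_zero 2 (den_ne _)
  have hne := den_ne (etaP k mu phip x t + etaM k mu phim x t + phi0)
  have h := hN.div hD2 hne2
  simp only [emx, emxx]
  refine h.congr_deriv ?_
  simp only [Pi.add_apply, Pi.pow_apply, Pi.mul_apply]
  field_simp
  ring

lemma pX_solEp (k mu phip phim phi0 : ℝ) :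
    pX (solEp k mu phip phim phi0) = epx k mu phip phim phi0 :=
  funext fun x => funext fun t => (solEp_hasDerivX k mu phip phim phi0 x t).deriv

lemma pX_solEm (k mu phip phim phi0 : ℝ) :
    pX (solEm k mu phip phim phi0) = emx k mu phip phim phi0 :=
  funext fun x => funext fun t => (solEm_hasDerivX k mu phip phim phi0 x t).deriv

lemma pX_epx (k mu phip phim phi0 : ℝ) :
    pX (epx k mu phip phim phi0) = epxx k mu phip phim phi0 :=
  funext fun x => funext fun t => (epx_hasDerivX k mu phip phim phi0 x t).deriv

lemma pX_emx (k mu phip phim phi0 : ℝ) :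
    pX (emx k mu phip phim phi0) = emxx k mu phip phim phi0 :=
  funext fun x => funext fun t => (emx_hasDerivX k mu phip phim phi0 x t).deriv

theorem one_soliton_solves_RD (k mu phip phim phi0 : ℝ) (hk : k ≠ 0)
    (hphi0 : Real.exp phi0 = 1 / (4 * k ^ 2)) :
    ∀ x t : ℝ,
      (-(pT (solEp k mu phip phim phi0) x t) + pX (pX (solEp k mu phip phim phi0)) x t =
          -2 * (-(solEp k mu phip phim phi0 x t * solEm k mu phip phim phi0 x t)) *
            solEp k mu phip phim phi0 x t) ∧
      (pT (solEm k mu phip phim phi0) x t + pX (pX (solEm k mu phip phim phi0)) x t =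
          -2 * (-(solEp k mu phip phim phi0 x t * solEm k mu phip phim phi0 x t)) *
            solEm k mu phip phim phi0 x t) := by
  intro x t
  have hu : (0:ℝ) < Real.exp (etaP k mu phip x t) := Real.exp_pos _
  have hv : (0:ℝ) < Real.exp (etaM k mu phim x t) := Real.exp_pos _
  have hk2 : (0:ℝ) < k ^ 2 := by positivity
  have et := (solEp_hasDerivT k mu phip phim phi0 x t).deriv
  have emt := (solEm_hasDerivT k mu phip phim phi0 x t).deriv
  rw [pX_solEp, pX_epx, pX_solEm, pX_emx]
  constructor
  · show -(pT (solEp k mu phip phim phi0) x t) + _ = _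
    rw [show pT (solEp k mu phip phim phi0) x t
        = deriv (fun s => solEp k mu phip phim phi0 x s) t from rfl, et]
    simp only [epxx, solEp, solEm]
    rw [Real.exp_add, Real.exp_add, hphi0]
    set u := Real.exp (etaP k mu phip x t)
    set v := Real.exp (etaM k mu phim x t)
    have hden : (0:ℝ) < 1 + u * v * (1 / (4 * k ^ 2)) := by positivity
    field_simp
    ring
  · show pT (solEm k mu phip phim phi0) x t + _ = _
    rw [show pT (solEm k mu phip phim phi0) x t
        = deriv (fun s => solEm k mu phip phim phi0 x s) t from rfl, emt]
    simp only [emxx, solEp, solEm]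
    rw [Real.exp_add, Real.exp_add, hphi0]
    set u := Real.exp (etaP k mu phip x t)
    set v := Real.exp (etaM k mu phim x t)
    have hden : (0:ℝ) < 1 + u * v * (1 / (4 * k ^ 2)) := by positivity
    field_simp
    ring
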